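/- Let p, q, r be positive integers with p ≥ 4, q ≥ 2p, and 2p − 1 ≤ r ≤ p + q − 5, and let G = (C_p ∪ K_q) ∨ K_r be the join of the disjoint union of a cycle C_p and a complete graph K_q with K_r, a graph on n = p + q + r vertices. Then σ₂(G) = 2r + 4, ᾱ(G) = 2p + 1, and hence n − 1 ≥ σ₂(G) ≥ 2·ᾱ(G). -/

import Mathlib

namespace SimpleGraph

variable {V : Type*}

/-- `G` has an `(s,t)`-bipartite-hole. -/
def HasBipHole (G : SimpleGraph V) (s t : ℕ) : Prop :=
  ∃ S T : Finset V, Disjoint S T ∧ S.card = s ∧ T.card = t ∧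
    ∀ a ∈ S, ∀ b ∈ T, ¬ G.Adj a b

/-- The bipartite-hole-number `ᾱ(G)`. -/
noncomputable def bipHoleNum (G : SimpleGraph V) : ℕ :=
  sInf {k | 0 < k ∧ ∃ s t : ℕ, 0 < s ∧ 0 < t ∧ s + t = k + 1 ∧ ¬ G.HasBipHole s t}

/-- `σ₂(G)`: the minimum of `d(x) + d(y)` over pairs of distinct nonadjacent vertices. -/
noncomputable def sigmaTwo (G : SimpleGraph V) : ℕ :=
  sInf {m | ∃ x y : V, x ≠ y ∧ ¬ G.Adj x y ∧
    m = (G.neighborSet x).ncard + (G.neighborSet y).ncard}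

/-- The join `G ∨ H` of two graphs: their disjoint union together with all edges between
the two parts. -/
def graphJoin {α β : Type*} (G : SimpleGraph α) (H : SimpleGraph β) :
    SimpleGraph (α ⊕ β) where
  Adj x y :=
    match x, y with
    | Sum.inl a, Sum.inl b => G.Adj a b
    | Sum.inr a, Sum.inr b => H.Adj a b
    | Sum.inl _, Sum.inr _ => True
    | Sum.inr _, Sum.inl _ => True
  symm := ⟨by rintro (a | a) (b | b) h <;> first | exact h.symm | trivial⟩
  loopless := ⟨by rintro (a | a) h <;> [exact G.irrefl h; exact H.irrefl h]⟩

end SimpleGraph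

section Aux
open SimpleGraph

variable {α β : Type*} {G : SimpleGraph α} {H : SimpleGraph β}

lemma graphJoin_adj_ll {a b : α} : (graphJoin G H).Adj (Sum.inl a) (Sum.inl b) ↔ G.Adj a b :=
  Iff.rfl

lemma graphJoin_adj_rr {a b : β} : (graphJoin G H).Adj (Sum.inr a) (Sum.inr b) ↔ H.Adj a b :=
  Iff.rfl

lemma graphJoin_adj_lr {a : α} {b : β} : (graphJoin G H).Adj (Sum.inl a) (Sum.inr b) := trivial

lemma graphJoin_adj_rl {a : β} {b : α} : (graphJoin G H).Adj (Sum.inr a) (Sum.inl b) := trivial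

lemma hasBipHole_symm {V : Type*} {G : SimpleGraph V} {s t : ℕ} (h : G.HasBipHole s t) :
    G.HasBipHole t s := by
  obtain ⟨S, T, hd, hS, hT, hno⟩ := h
  exact ⟨T, S, hd.symm, hT, hS, fun a ha b hb hab => hno b hb a ha hab.symm⟩

lemma ncard_neighborSet_eq_degree {V : Type*} (G : SimpleGraph V) (v : V)
    [Fintype (G.neighborSet v)] : (G.neighborSet v).ncard = G.degree v := by
  rw [SimpleGraph.degree, neighborFinset_def, Set.ncard_eq_toFinset_card']

-- neighbor set of a cycle vertex in the join graph
lemma nbhd_cyc (p q r : ℕ) (hp : 3 ≤ p) (v : Fin p) :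
    ((graphJoin ((cycleGraph p).sum (⊤ : SimpleGraph (Fin q)))
        (⊤ : SimpleGraph (Fin r))).neighborSet (Sum.inl (Sum.inl v))).ncard = 2 + r := by
  obtain ⟨n, rfl⟩ : ∃ n, p = n + 3 := ⟨p - 3, by omega⟩
  have hset : (graphJoin ((cycleGraph (n+3)).sum (⊤ : SimpleGraph (Fin q)))
        (⊤ : SimpleGraph (Fin r))).neighborSet (Sum.inl (Sum.inl v)) =
      (fun w => Sum.inl (Sum.inl w)) '' ((cycleGraph (n+3)).neighborSet v) ∪
        Sum.inr '' Set.univ := by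
    ext w
    rcases w with (a | a) | z
    · simp only [mem_neighborSet, Set.mem_union, Set.mem_image, Set.mem_univ]
      constructor
      · intro h; exact Or.inl ⟨a, h, rfl⟩
      · rintro (⟨b, hb, hbe⟩ | ⟨z, _, hze⟩)
        · obtain rfl : b = a := by simpa using hbe
          exact hb
        · simp at hze
    · simp only [mem_neighborSet, Set.mem_union, Set.mem_image, Set.mem_univ]
      constructor
      · intro h; exact absurd h (by simp [graphJoin_adj_ll])
      · rintro (⟨b, _, hbe⟩ | ⟨z, _, hze⟩)
        · simp at hbe
        · simp at hze
    · simp only [mem_neighborSet, Set.mem_union, Set.mem_image, Set.mem_univ]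
      exact ⟨fun _ => Or.inr ⟨z, trivial, rfl⟩, fun _ => graphJoin_adj_lr⟩
  rw [hset, Set.ncard_union_eq (by simp [Set.disjoint_left]) (Set.toFinite _) (Set.toFinite _),
    Set.ncard_image_of_injective _ (fun a b h => by simpa using h),
    Set.ncard_image_of_injective _ Sum.inr_injective, Set.ncard_univ,
    Nat.card_eq_fintype_card, Fintype.card_fin,
    ncard_neighborSet_eq_degree, cycleGraph_degree_three_le]

-- neighbor set of a complete-part vertex in the join graph
lemma nbhd_cpl (p q r : ℕ) (v : Fin q) :
    ((graphJoin ((cycleGraph p).sum (⊤ : SimpleGraph (Fin q)))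
        (⊤ : SimpleGraph (Fin r))).neighborSet (Sum.inl (Sum.inr v))).ncard = (q - 1) + r := by
  have hset : (graphJoin ((cycleGraph p).sum (⊤ : SimpleGraph (Fin q)))
        (⊤ : SimpleGraph (Fin r))).neighborSet (Sum.inl (Sum.inr v)) =
      (fun w => Sum.inl (Sum.inr w)) '' ((⊤ : SimpleGraph (Fin q)).neighborSet v) ∪
        Sum.inr '' Set.univ := by
    ext w
    rcases w with (a | a) | z
    · simp only [mem_neighborSet, Set.mem_union, Set.mem_image, Set.mem_univ]
      constructor
      · intro h; exact absurd h (by simp [graphJoin_adj_ll])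
      · rintro (⟨b, _, hbe⟩ | ⟨z, _, hze⟩)
        · simp at hbe
        · simp at hze
    · simp only [mem_neighborSet, Set.mem_union, Set.mem_image, Set.mem_univ]
      constructor
      · intro h; exact Or.inl ⟨a, h, rfl⟩
      · rintro (⟨b, hb, hbe⟩ | ⟨z, _, hze⟩)
        · obtain rfl : b = a := by simpa using hbe
          exact hb
        · simp at hze
    · simp only [mem_neighborSet, Set.mem_union, Set.mem_image, Set.mem_univ]
      exact ⟨fun _ => Or.inr ⟨z, trivial, rfl⟩, fun _ => graphJoin_adj_lr⟩
  rw [hset, Set.ncard_union_eq (by simp [Set.disjoint_left]) (Set.toFinite _) (Set.toFinite _),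
    Set.ncard_image_of_injective _ (fun a b h => by simpa using h),
    Set.ncard_image_of_injective _ Sum.inr_injective, Set.ncard_univ,
    Nat.card_eq_fintype_card, Fintype.card_fin,
    ncard_neighborSet_eq_degree, complete_graph_degree, Fintype.card_fin]

end Aux
section Aux2
open SimpleGraph

lemma cyc_nonadj (p : ℕ) (hp : 4 ≤ p) :
    ∃ u v : Fin p, u ≠ v ∧ ¬ (cycleGraph p).Adj u v := by
  refine ⟨⟨0, by omega⟩, ⟨2, by omega⟩, by simp [Fin.ext_iff], ?_⟩
  rw [cycleGraph_adj']
  push_neg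
  constructor
  · rw [Fin.sub_def]
    simp only
    have : (p - 2 + 0) % p = p - 2 := Nat.mod_eq_of_lt (by omega)
    omega
  · rw [Fin.sub_def]
    simp only
    have : (p - 0 + 2) % p = 2 := by
      rw [Nat.sub_zero, Nat.add_comm, Nat.add_mod_right, Nat.mod_eq_of_lt (by omega)]
    omega

lemma hole_of {p q r s t : ℕ} (hs : s ≤ p) (ht : t ≤ q) :
    (graphJoin ((cycleGraph p).sum (⊤ : SimpleGraph (Fin q)))
      (⊤ : SimpleGraph (Fin r))).HasBipHole s t := by
  refine ⟨Finset.univ.map ⟨fun i : Fin s => Sum.inl (Sum.inl (Fin.castLE hs i)),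
      fun a b h => by simpa [Fin.ext_iff] using h⟩,
    Finset.univ.map ⟨fun j : Fin t => Sum.inl (Sum.inr (Fin.castLE ht j)),
      fun a b h => by simpa [Fin.ext_iff] using h⟩, ?_, by simp, by simp, ?_⟩
  · rw [Finset.disjoint_left]
    intro a ha hb
    simp only [Finset.mem_map, Finset.mem_univ, Function.Embedding.coeFn_mk, true_and] at ha hb
    obtain ⟨i, rfl⟩ := ha
    obtain ⟨j, hj⟩ := hb
    change (Sum.inl (Sum.inr _) : (Fin p ⊕ Fin q) ⊕ Fin r) = Sum.inl (Sum.inl _) at hj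
    simp at hj
  · intro a ha b hb
    simp only [Finset.mem_map, Finset.mem_univ, Function.Embedding.coeFn_mk, true_and] at ha hb
    obtain ⟨i, rfl⟩ := ha
    obtain ⟨j, rfl⟩ := hb
    intro h
    change (graphJoin _ _).Adj (Sum.inl (Sum.inl _)) (Sum.inl (Sum.inr _)) at h
    rw [graphJoin_adj_ll] at h
    simp at h

lemma card_le_of_all_inl_inl {p q r : ℕ} (T : Finset ((Fin p ⊕ Fin q) ⊕ Fin r))
    (h : ∀ b ∈ T, ∃ v : Fin p, b = Sum.inl (Sum.inl v)) : T.card ≤ p := by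
  classical
  have hsub : T ⊆ Finset.univ.map
      ⟨fun v : Fin p => Sum.inl (Sum.inl v), fun a b h => by simpa using h⟩ := by
    intro b hb
    obtain ⟨v, rfl⟩ := h b hb
    exact Finset.mem_map.mpr ⟨v, Finset.mem_univ _, rfl⟩
  calc T.card ≤ _ := Finset.card_le_card hsub
    _ = p := by simp

lemma no_big_hole (p q r : ℕ) :
    ¬ (graphJoin ((cycleGraph p).sum (⊤ : SimpleGraph (Fin q)))
      (⊤ : SimpleGraph (Fin r))).HasBipHole (p+1) (p+1) := by
  rintro ⟨S, T, hd, hS, hT, hno⟩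
  have hSne : S.Nonempty := by rw [← Finset.card_pos, hS]; omega
  have hTne : T.Nonempty := by rw [← Finset.card_pos, hT]; omega
  have hSr : ∀ z : Fin r, Sum.inr z ∉ S := by
    intro z hz
    obtain ⟨b, hb⟩ := hTne
    rcases b with b' | b'
    · exact hno _ hz _ hb graphJoin_adj_rl
    · have hne : z ≠ b' := by
        rintro rfl
        exact Finset.disjoint_left.mp hd hz hb
      exact hno _ hz _ hb (graphJoin_adj_rr.mpr ((top_adj z b').mpr hne))
  have hTr : ∀ z : Fin r, Sum.inr z ∉ T := by
    intro z hz
    obtain ⟨a, ha⟩ := hSne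
    rcases a with a' | a'
    · exact hno _ ha _ hz graphJoin_adj_lr
    · have hne : a' ≠ z := by
        rintro rfl
        exact Finset.disjoint_left.mp hd ha hz
      exact hno _ ha _ hz (graphJoin_adj_rr.mpr ((top_adj a' z).mpr hne))
  by_cases hSq : ∃ u : Fin q, Sum.inl (Sum.inr u) ∈ S
  · obtain ⟨u, hu⟩ := hSq
    have hall : ∀ b ∈ T, ∃ v : Fin p, b = Sum.inl (Sum.inl v) := by
      intro b hb
      rcases b with (v | w) | z
      · exact ⟨v, rfl⟩
      · exfalso
        have hne : u ≠ w := by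
          rintro rfl
          exact Finset.disjoint_left.mp hd hu hb
        exact hno _ hu _ hb (graphJoin_adj_ll.mpr (by exact (top_adj u w).mpr hne))
      · exact absurd hb (hTr z)
    have := card_le_of_all_inl_inl T hall
    omega
  · push_neg at hSq
    have hall : ∀ a ∈ S, ∃ v : Fin p, a = Sum.inl (Sum.inl v) := by
      intro a ha
      rcases a with (v | w) | z
      · exact ⟨v, rfl⟩
      · exact absurd ha (hSq w)
      · exact absurd ha (hSr z)
    have := card_le_of_all_inl_inl S hall
    omega

end Aux2
open SimpleGraph in
/-- For positive integers `p ≥ 4`, `q ≥ 2p`, `2p - 1 ≤ r ≤ p + q - 5`,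
the graph `G = (C_p ∪ K_q) ∨ K_r` on `n = p + q + r` vertices satisfies `σ₂(G) = 2r + 4`,
`ᾱ(G) = 2p + 1`, and hence `n - 1 ≥ σ₂(G) ≥ 2ᾱ(G)`. -/
theorem stmt19 (p q r : ℕ) (hp : 4 ≤ p) (hq : 2 * p ≤ q)
    (hr : 2 * p - 1 ≤ r) (hr' : r ≤ p + q - 5)
    (G : SimpleGraph ((Fin p ⊕ Fin q) ⊕ Fin r))
    (hG : G = graphJoin
      ((SimpleGraph.cycleGraph p).sum (⊤ : SimpleGraph (Fin q)))
      (⊤ : SimpleGraph (Fin r))) :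
    G.sigmaTwo = 2 * r + 4 ∧
    G.bipHoleNum = 2 * p + 1 ∧
    G.sigmaTwo ≤ p + q + r - 1 ∧ 2 * G.bipHoleNum ≤ G.sigmaTwo := by
  subst hG
  have hp3 : 3 ≤ p := by omega
  have hsig : (graphJoin ((cycleGraph p).sum (⊤ : SimpleGraph (Fin q)))
      (⊤ : SimpleGraph (Fin r))).sigmaTwo = 2 * r + 4 := by
    have hmem : (2 * r + 4) ∈ {m | ∃ x y : (Fin p ⊕ Fin q) ⊕ Fin r, x ≠ y ∧
        ¬ (graphJoin ((cycleGraph p).sum (⊤ : SimpleGraph (Fin q)))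
          (⊤ : SimpleGraph (Fin r))).Adj x y ∧
        m = ((graphJoin ((cycleGraph p).sum (⊤ : SimpleGraph (Fin q)))
          (⊤ : SimpleGraph (Fin r))).neighborSet x).ncard +
          ((graphJoin ((cycleGraph p).sum (⊤ : SimpleGraph (Fin q)))
          (⊤ : SimpleGraph (Fin r))).neighborSet y).ncard} := by
      obtain ⟨u, v, huv, hnadj⟩ := cyc_nonadj p hp
      refine ⟨Sum.inl (Sum.inl u), Sum.inl (Sum.inl v), by simpa using huv, ?_, ?_⟩
      · rw [graphJoin_adj_ll]
        intro h
        exact hnadj h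
      · rw [nbhd_cyc p q r hp3 u, nbhd_cyc p q r hp3 v]
        omega
    refine le_antisymm (Nat.sInf_le hmem) (le_csInf ⟨_, hmem⟩ ?_)
    rintro m ⟨x, y, hxy, hnadj, rfl⟩
    rcases x with (u | u) | z <;> rcases y with (v | v) | w
    · rw [nbhd_cyc p q r hp3 u, nbhd_cyc p q r hp3 v]; omega
    · rw [nbhd_cyc p q r hp3 u, nbhd_cpl p q r v]; omega
    · exact absurd graphJoin_adj_lr hnadj
    · rw [nbhd_cpl p q r u, nbhd_cyc p q r hp3 v]; omega
    · exfalso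
      have hne : u ≠ v := by simpa using hxy
      exact hnadj (graphJoin_adj_ll.mpr (by exact (top_adj u v).mpr hne))
    · exact absurd graphJoin_adj_lr hnadj
    · exact absurd graphJoin_adj_rl hnadj
    · exact absurd graphJoin_adj_rl hnadj
    · exfalso
      have hne : z ≠ w := by simpa using hxy
      exact hnadj (graphJoin_adj_rr.mpr ((top_adj z w).mpr hne))
  have hbip : (graphJoin ((cycleGraph p).sum (⊤ : SimpleGraph (Fin q)))
      (⊤ : SimpleGraph (Fin r))).bipHoleNum = 2 * p + 1 := by
    have hmem : (2 * p + 1) ∈ {k | 0 < k ∧ ∃ s t : ℕ, 0 < s ∧ 0 < t ∧ s + t = k + 1 ∧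
        ¬ (graphJoin ((cycleGraph p).sum (⊤ : SimpleGraph (Fin q)))
          (⊤ : SimpleGraph (Fin r))).HasBipHole s t} :=
      ⟨by omega, p + 1, p + 1, by omega, by omega, by omega, no_big_hole p q r⟩
    refine le_antisymm (Nat.sInf_le hmem) (le_csInf ⟨_, hmem⟩ ?_)
    rintro k ⟨hk0, s, t, hs0, ht0, hst, hnh⟩
    by_contra hlt
    push_neg at hlt
    apply hnh
    rcases le_total s t with h | h
    · exact hole_of (by omega) (by omega)
    · exact hasBipHole_symm (hole_of (by omega) (by omega))
  refine ⟨hsig, hbip, ?_, ?_⟩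
  · rw [hsig]; omega
  · rw [hsig, hbip]; omega
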